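/- Let X be a complex Banach space, U a bounded linear operator on X, κ ∈ ℂ, and r a real number with ‖U‖ < r < |κ|. Then U + κI is invertible in B(X) and (2πi)⁻¹ ∮_{|λ−κ|=r} λ⁻¹ (λI − (U + κI))⁻¹ dλ = (U + κI)⁻¹, where for each λ on the circle of center κ and radius r the operator λI − (U + κI) is invertible in B(X) and λ ≠ 0. -/

import Mathlib

open Complex Metric Set intervalIntegral

section aux

variable {X : Type*} [NormedAddCommGroup X] [NormedSpace ℂ X] [CompleteSpace X]

/-- If `‖U‖ < |c|` then `c • 1 - U` is a unit. -/
lemma aux_isUnit (U : X →L[ℂ] X) (c : ℂ) (hc : ‖U‖ < ‖c‖) :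
    IsUnit (c • (1 : X →L[ℂ] X) - U) := by
  have hc0 : c ≠ 0 := by
    intro h
    rw [h] at hc
    simpa using (norm_nonneg U).not_gt (by simpa using hc)
  have hsmall : ‖c⁻¹ • U‖ < 1 := by
    have h1' := norm_smul (α := ℂ) (β := X →L[ℂ] X) c⁻¹ U
    rw [h1', norm_inv]
    have hcpos : 0 < ‖c‖ := by
      exact norm_pos_iff.mpr hc0
    rw [inv_mul_lt_iff₀ hcpos, mul_one]
    exact hc
  have hu : IsUnit ((1 : X →L[ℂ] X) - c⁻¹ • U) := (Units.oneSub _ hsmall).isUnit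
  have heq : c • (1 : X →L[ℂ] X) - U = c • ((1 : X →L[ℂ] X) - c⁻¹ • U) := by
    rw [smul_sub, smul_smul, mul_inv_cancel₀ hc0, one_smul]
  rw [heq, Algebra.smul_def]
  exact (hc0.isUnit.map (algebraMap ℂ (X →L[ℂ] X))).mul hu

lemma aux_inverse_smul (c : ℂ) (hc0 : c ≠ 0) (x : X →L[ℂ] X) (hx : IsUnit x) :
    Ring.inverse (c • x) = c⁻¹ • Ring.inverse x := by
  have h1 : (c • x) * (c⁻¹ • Ring.inverse x) = 1 := by
    rw [smul_mul_smul_comm, mul_inv_cancel₀ hc0, Ring.mul_inverse_cancel x hx, one_smul]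
  have h2 : (c⁻¹ • Ring.inverse x) * (c • x) = 1 := by
    rw [smul_mul_smul_comm, inv_mul_cancel₀ hc0, Ring.inverse_mul_cancel x hx, one_smul]
  have : Ring.inverse ((⟨c • x, c⁻¹ • Ring.inverse x, h1, h2⟩ : (X →L[ℂ] X)ˣ) :
      X →L[ℂ] X) = c⁻¹ • Ring.inverse x := Ring.inverse_unit _
  exact this

/-- Partial fractions identity. -/
lemma aux_key (A : X →L[ℂ] X) (hA : IsUnit A) (z : ℂ) (hz0 : z ≠ 0)
    (hz : IsUnit (z • (1 : X →L[ℂ] X) - A)) :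
    z⁻¹ • Ring.inverse (z • (1 : X →L[ℂ] X) - A)
      = Ring.inverse A * Ring.inverse (z • (1 : X →L[ℂ] X) - A) - z⁻¹ • Ring.inverse A := by
  set B := Ring.inverse (z • (1 : X →L[ℂ] X) - A) with hBdef
  have h1 : (z • (1 : X →L[ℂ] X) - A) * B = 1 := Ring.mul_inverse_cancel _ hz
  have h2 : B * (z • (1 : X →L[ℂ] X) - A) = 1 := Ring.inverse_mul_cancel _ hz
  have hA1 : Ring.inverse A * A = 1 := Ring.inverse_mul_cancel _ hA
  have hBA : B * A = z • B - 1 := by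
    have : B * (z • (1 : X →L[ℂ] X)) - B * (z • (1 : X →L[ℂ] X) - A) = B * A := by
      rw [← mul_sub]; congr 1; abel
    rw [← this, h2, mul_smul_comm, mul_one]
  have hstep : B - z⁻¹ • 1 = z⁻¹ • (B * A) := by
    rw [hBA, smul_sub, smul_smul, inv_mul_cancel₀ hz0, one_smul]
  calc z⁻¹ • B = z⁻¹ • (Ring.inverse A * (A * B)) := by
        rw [← mul_assoc, hA1, one_mul]
    _ = z⁻¹ • (Ring.inverse A * (B * A)) := by
        congr 2
        have hAB : A * B = z • B - 1 := by
          have : (z • (1 : X →L[ℂ] X)) * B - (z • (1 : X →L[ℂ] X) - A) * B = A * B := by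
            rw [← sub_mul]; congr 1; abel
          rw [← this, h1, smul_mul_assoc, one_mul]
        rw [hAB, hBA]
    _ = Ring.inverse A * (z⁻¹ • (B * A)) := (mul_smul_comm _ _ _).symm
    _ = Ring.inverse A * (B - z⁻¹ • 1) := by rw [← hstep]
    _ = Ring.inverse A * B - z⁻¹ • Ring.inverse A := by
        rw [mul_sub, mul_smul_comm, mul_one]

/-- The resolvent integral: `∮_{C(κ,r)} (z•1 - (U + κ•1))⁻¹ dz = 2πi • 1`. -/
lemma aux_resolvent_integral (U : X →L[ℂ] X) (κ : ℂ) (r : ℝ) (hr : ‖U‖ < r) :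
    (∮ z in C(κ, r), Ring.inverse (z • (1 : X →L[ℂ] X) - (U + κ • (1 : X →L[ℂ] X))))
      = (2 * Real.pi * Complex.I : ℂ) • (1 : X →L[ℂ] X) := by
  have hr0 : (0 : ℝ) < r := (norm_nonneg U).trans_lt hr
  set s : ℝ := r⁻¹ with hsdef
  have hs0 : (0 : ℝ) < s := by positivity
  set g : ℂ → (X →L[ℂ] X) := fun w => Ring.inverse (1 - w • U) with hgdef
  have hunit : ∀ w ∈ closedBall (0 : ℂ) s, IsUnit ((1 : X →L[ℂ] X) - w • U) := by
    intro w hw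
    have hw' : ‖w‖ ≤ s := by simpa [Complex.dist_eq] using hw
    have : ‖w • U‖ < 1 := by
      have h1 := norm_smul (α := ℂ) (β := X →L[ℂ] X) w U
      rw [h1]
      calc ‖w‖ * ‖U‖ ≤ s * ‖U‖ := by
            exact mul_le_mul_of_nonneg_right hw' (norm_nonneg U)
        _ < s * r := by
            exact mul_lt_mul_of_pos_left hr hs0
        _ = 1 := inv_mul_cancel₀ hr0.ne'
    exact (Units.oneSub _ this).isUnit
  have hgd : ∀ w ∈ closedBall (0 : ℂ) s, DifferentiableAt ℂ g w := by
    intro w hw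
    exact ((differentiableAt_const (1 : X →L[ℂ] X)).sub
      (differentiableAt_id.smul_const U)).inverse (hunit w hw)
  have hCauchy := Complex.circleIntegral_sub_inv_smul_of_differentiable_on_off_countable
    (s := (∅ : Set ℂ)) countable_empty (mem_ball_self hs0)
    (fun w hw => ((hgd w hw).continuousAt).continuousWithinAt)
    (fun w hw => hgd w (ball_subset_closedBall hw.1))
  have hg0 : g 0 = 1 := by simp [hgdef]
  rw [hg0] at hCauchy
  -- rewrite both circle integrals as interval integrals
  have hL : (∮ z in C(κ, r), Ring.inverse (z • (1 : X →L[ℂ] X) - (U + κ • (1 : X →L[ℂ] X))))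
      = ∫ θ in (0 : ℝ)..(2 * Real.pi), Complex.I • g (circleMap 0 s (-θ)) := by
    rw [circleIntegral]
    refine intervalIntegral.integral_congr fun θ _ => ?_
    have hc0 : circleMap 0 r θ ≠ 0 := circleMap_ne_center hr0.ne'
    have habs : ‖circleMap 0 r θ‖ = r := by
      rw [norm_circleMap_zero]; exact abs_of_pos hr0
    have hx : IsUnit ((1 : X →L[ℂ] X) - (circleMap 0 r θ)⁻¹ • U) := by
      apply hunit
      simp only [mem_closedBall, Complex.dist_eq, sub_zero, norm_inv, habs]
      rw [hsdef]
    have heq1 : circleMap κ r θ • (1 : X →L[ℂ] X) - (U + κ • (1 : X →L[ℂ] X))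
        = circleMap 0 r θ • ((1 : X →L[ℂ] X) - (circleMap 0 r θ)⁻¹ • U) := by
      rw [smul_sub, smul_smul, mul_inv_cancel₀ hc0, one_smul]
      have : circleMap κ r θ = κ + circleMap 0 r θ := by
        simp [circleMap, add_comm]
      rw [this, add_smul]
      abel
    rw [deriv_circleMap, heq1, aux_inverse_smul _ hc0 _ hx]
    rw [smul_smul]
    have hinv : (circleMap 0 r θ)⁻¹ = circleMap 0 s (-θ) := by
      rw [hsdef]
      simp only [circleMap_zero]
      rw [mul_inv, ← Complex.exp_neg]
      have harg : ((-θ : ℝ) : ℂ) * Complex.I = -((θ : ℂ) * Complex.I) := by push_cast; ring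
      rw [harg, Complex.ofReal_inv]
    rw [mul_comm (circleMap 0 r θ) Complex.I, mul_assoc, mul_inv_cancel₀ hc0, mul_one, hinv]
  have hR : (∮ w in C(0, s), (w - 0)⁻¹ • g w)
      = ∫ θ in (0 : ℝ)..(2 * Real.pi), Complex.I • g (circleMap 0 s θ) := by
    rw [circleIntegral]
    refine intervalIntegral.integral_congr fun θ _ => ?_
    have hc0 : circleMap 0 s θ ≠ 0 := circleMap_ne_center hs0.ne'
    rw [deriv_circleMap, sub_zero, smul_smul, mul_comm (circleMap 0 s θ) Complex.I,
      mul_assoc, mul_inv_cancel₀ hc0, mul_one]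
  have hper : Function.Periodic (fun θ : ℝ => Complex.I • g (circleMap 0 s θ))
      (2 * Real.pi) := fun θ => by
    simp [(periodic_circleMap 0 s) θ]
  have hneg : (∫ θ in (0 : ℝ)..(2 * Real.pi), Complex.I • g (circleMap 0 s (-θ)))
      = ∫ θ in (0 : ℝ)..(2 * Real.pi), Complex.I • g (circleMap 0 s θ) := by
    rw [intervalIntegral.integral_comp_neg (fun θ => Complex.I • g (circleMap 0 s θ))]
    have := hper.intervalIntegral_add_eq (-(2 * Real.pi)) 0
    simpa using this
  rw [hL, hneg, ← hR, hCauchy]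

end aux

/-- For `‖U‖ < r < |κ|`, the operator `U + κI` is invertible in `B(X)`; every `λ`
on the circle of center `κ` and radius `r` is nonzero and makes `λI − (U + κI)` invertible; and
`(2πi)⁻¹ ∮_{|λ−κ|=r} λ⁻¹ (λI − (U + κI))⁻¹ dλ = (U + κI)⁻¹`. -/
theorem stmt_3 {X : Type*} [NormedAddCommGroup X] [NormedSpace ℂ X] [CompleteSpace X]
    (U : X →L[ℂ] X) (κ : ℂ) (r : ℝ) (hr : ‖U‖ < r) (hrκ : r < ‖κ‖) :
    IsUnit (U + κ • (1 : X →L[ℂ] X)) ∧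
      (∀ z : ℂ, ‖z - κ‖ = r →
        z ≠ 0 ∧ IsUnit (z • (1 : X →L[ℂ] X) - (U + κ • (1 : X →L[ℂ] X)))) ∧
      (2 * Real.pi * Complex.I : ℂ)⁻¹ •
          (∮ z in C(κ, r),
            z⁻¹ • Ring.inverse (z • (1 : X →L[ℂ] X) - (U + κ • (1 : X →L[ℂ] X)))) =
        Ring.inverse (U + κ • (1 : X →L[ℂ] X)) := by
  have hr0 : (0 : ℝ) < r := (norm_nonneg U).trans_lt hr
  set A := U + κ • (1 : X →L[ℂ] X) with hAdef
  have hA : IsUnit A := by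
    have : A = κ • (1 : X →L[ℂ] X) - (-U) := by rw [hAdef]; abel
    rw [this]
    exact aux_isUnit (-U) κ (by rw [norm_neg]; exact hr.trans hrκ)
  have hz_ne : ∀ z : ℂ, ‖z - κ‖ ≤ r → z ≠ 0 := by
    intro z hz h0
    rw [h0, zero_sub, norm_neg] at hz
    exact absurd (hz.trans_lt hrκ) (lt_irrefl _)
  have hcirc : ∀ z : ℂ, ‖z - κ‖ = r →
      z ≠ 0 ∧ IsUnit (z • (1 : X →L[ℂ] X) - A) := by
    intro z hz
    refine ⟨hz_ne z hz.le, ?_⟩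
    have heq : z • (1 : X →L[ℂ] X) - A = (z - κ) • (1 : X →L[ℂ] X) - U := by
      rw [hAdef, sub_smul]; abel
    rw [heq]
    exact aux_isUnit U (z - κ) (by rw [hz]; exact hr)
  refine ⟨hA, hcirc, ?_⟩
  have hsphere : ∀ z ∈ sphere κ r, ‖z - κ‖ = r := by
    intro z hz
    simpa [Complex.dist_eq] using hz
  -- continuity facts
  have hBdiff : ∀ z ∈ sphere κ r, DifferentiableAt ℂ
      (fun z : ℂ => Ring.inverse (z • (1 : X →L[ℂ] X) - A)) z := by
    intro z hz
    exact ((differentiableAt_id.smul_const (1 : X →L[ℂ] X)).sub_const A).inverse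
      (hcirc z (hsphere z hz)).2
  have hBcont : ContinuousOn (fun z : ℂ => Ring.inverse (z • (1 : X →L[ℂ] X) - A))
      (sphere κ r) := fun z hz => ((hBdiff z hz).continuousAt).continuousWithinAt
  have hf1 : CircleIntegrable
      (fun z : ℂ => Ring.inverse A * Ring.inverse (z • (1 : X →L[ℂ] X) - A)) κ r :=
    (continuousOn_const.mul hBcont).circleIntegrable hr0.le
  have hf2 : CircleIntegrable (fun z : ℂ => z⁻¹ • Ring.inverse A) κ r := by
    refine (ContinuousOn.fun_smul ?_ continuousOn_const).circleIntegrable hr0.le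
    exact continuousOn_id.inv₀ fun z hz => hz_ne z (hsphere z hz).le
  have hEq : EqOn (fun z : ℂ => z⁻¹ • Ring.inverse (z • (1 : X →L[ℂ] X) - A))
      (fun z : ℂ => Ring.inverse A * Ring.inverse (z • (1 : X →L[ℂ] X) - A)
        - z⁻¹ • Ring.inverse A) (sphere κ r) := by
    intro z hz
    exact aux_key A hA z (hcirc z (hsphere z hz)).1 (hcirc z (hsphere z hz)).2
  rw [circleIntegral.integral_congr hr0.le hEq, circleIntegral.integral_sub hf1 hf2]
  -- second integral vanishes
  have hzero : (∮ z in C(κ, r), z⁻¹ • Ring.inverse A) = 0 := by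
    rw [circleIntegral.integral_smul_const]
    have : (∮ z in C(κ, r), z⁻¹) = 0 := by
      refine Complex.circleIntegral_eq_zero_of_differentiable_on_off_countable hr0.le
        (countable_empty) ?_ ?_
      · intro z hz
        have hz0 : z ≠ 0 := hz_ne z (by simpa [Complex.dist_eq] using hz)
        exact (continuousAt_inv₀ hz0).continuousWithinAt
      · intro z hz
        have hz0 : z ≠ 0 := hz_ne z
          (le_of_lt (by simpa [Complex.dist_eq] using hz.1))
        exact differentiableAt_inv (𝕜 := ℂ) hz0
    rw [this, zero_smul]
  -- first integral
  have hBint : CircleIntegrable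
      (fun z : ℂ => Ring.inverse (z • (1 : X →L[ℂ] X) - A)) κ r :=
    hBcont.circleIntegrable hr0.le
  have hmul : (∮ z in C(κ, r), Ring.inverse A * Ring.inverse (z • (1 : X →L[ℂ] X) - A))
      = Ring.inverse A * ∮ z in C(κ, r), Ring.inverse (z • (1 : X →L[ℂ] X) - A) := by
    set L := ContinuousLinearMap.mul ℂ (X →L[ℂ] X) (Ring.inverse A) with hLdef
    have h1 : (∮ z in C(κ, r), Ring.inverse A * Ring.inverse (z • (1 : X →L[ℂ] X) - A))
        = ∮ z in C(κ, r), L (Ring.inverse (z • (1 : X →L[ℂ] X) - A)) := rfl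
    rw [h1, circleIntegral, circleIntegral]
    have h2 : (∫ θ in (0:ℝ)..(2 * Real.pi), deriv (circleMap κ r) θ •
          L (Ring.inverse (circleMap κ r θ • (1 : X →L[ℂ] X) - A)))
        = ∫ θ in (0:ℝ)..(2 * Real.pi), L (deriv (circleMap κ r) θ •
          Ring.inverse (circleMap κ r θ • (1 : X →L[ℂ] X) - A)) := by
      refine intervalIntegral.integral_congr fun θ _ => ?_
      rw [map_smul]
    rw [h2, L.intervalIntegral_comp_comm hBint.out]
    rfl
  rw [hzero, hmul, aux_resolvent_integral U κ r hr, sub_zero, mul_smul_comm, mul_one]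
  have h2πi : (2 * Real.pi * Complex.I : ℂ) ≠ 0 := by
    simp [Real.pi_ne_zero, Complex.I_ne_zero]
  rw [inv_smul_smul₀ h2πi]
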